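/- Let 0 ≤ a < b, let α ∈ [0,1], m ∈ (0,1], s ∈ (0,1], let q > 1 with conjugate exponent p = q/(q−1), and let f : ℝ → ℝ be differentiable on an open interval containing [a, b/m] with f' integrable on [a, b]. If |f'|^q is s-(α,m)-convex, i.e. for all x, y ∈ [a, b] and t ∈ [0,1], |f'(t·x + (1−t)·y)|^q ≤ t^{αs} |f'(x)|^q + m (1 − t^{αs}) |f'(y/m)|^q, then |(f(a)+f(b))/2 − (1/(b−a)) ∫_a^b f(x) dx| ≤ ((b−a) / 2^{(p+1)/p}) · [ v₁ |f'(a)|^q + v₂ |f'(b/m)|^q ]^{1/q}, where v₁ = (1 + 2^{αs}·(αs)) / (2^{αs} (αs+1)(αs+2)) and v₂ = m (1/2 − v₁). -/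

import Mathlib

open MeasureTheory

lemma hh_aux_deriv (a b u : ℝ) (hab : a < b) (hu0 : 0 ≤ u) (x : ℝ) (hx : x ∈ Set.Icc a b) :
    HasDerivAt (fun y => -((b-a)^2/(2*(u+1))) * ((b - y)/(b - a)) ^ (u+1)
        + ((b-a)^2/(u+2)) * ((b - y)/(b - a)) ^ (u+2))
      ((x - (a+b)/2) * ((b - x)/(b - a)) ^ u) x := by
  have hL : (0:ℝ) < b - a := by linarith
  have hLne : b - a ≠ 0 := ne_of_gt hL
  have hr0 : 0 ≤ (b - x)/(b - a) := div_nonneg (by linarith [hx.2]) hL.le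
  have hb : HasDerivAt (fun y => (b - y)/(b - a)) (-1/(b - a)) x := by
    simpa using ((hasDerivAt_id x).const_sub b).div_const (b - a)
  have h1 : HasDerivAt (fun y => ((b - y)/(b - a)) ^ (u+1))
      ((u+1) * ((b - x)/(b - a)) ^ u * (-1/(b - a))) x := by
    have := (Real.hasDerivAt_rpow_const (x := (b - x)/(b - a)) (p := u+1)
      (Or.inr (by linarith))).comp x hb
    simpa [Function.comp_def, show u + 1 - 1 = u by ring] using this
  have h2 : HasDerivAt (fun y => ((b - y)/(b - a)) ^ (u+2))
      ((u+2) * ((b - x)/(b - a)) ^ (u+1) * (-1/(b - a))) x := by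
    have := (Real.hasDerivAt_rpow_const (x := (b - x)/(b - a)) (p := u+2)
      (Or.inr (by linarith))).comp x hb
    simpa [Function.comp_def, show u + 2 - 1 = u + 1 by ring] using this
  have H := (h1.const_mul (-((b-a)^2/(2*(u+1))))).add (h2.const_mul ((b-a)^2/(u+2)))
  refine H.congr_deriv ?_
  have hsplit : ((b - x)/(b - a)) ^ (u+1) = ((b - x)/(b - a)) ^ u * ((b - x)/(b - a)) := by
    rw [Real.rpow_add' hr0 (by linarith), Real.rpow_one]
  rw [hsplit]
  have hmul : (b - a) * ((b - x)/(b - a)) = b - x := by field_simp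
  field_simp
  ring

lemma hh_aux_I2 (a b u : ℝ) (hab : a < b) (hu0 : 0 ≤ u) :
    ∫ x in a..b, |x - (a+b)/2| * ((b - x)/(b - a)) ^ u =
      (b - a)^2 * ((1 + 2 ^ u * u) / (2 ^ u * (u+1) * (u+2))) / 2 := by
  have hL : (0:ℝ) < b - a := by linarith
  have haM : a ≤ (a+b)/2 := by linarith
  have hMb : (a+b)/2 ≤ b := by linarith
  have hcont : Continuous fun x : ℝ => (x - (a+b)/2) * ((b - x)/(b - a)) ^ u :=
    (continuous_id.sub continuous_const).mul
      ((Real.continuous_rpow_const hu0).comp ((continuous_const.sub continuous_id).div_const _))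
  have hconta : Continuous fun x : ℝ => |x - (a+b)/2| * ((b - x)/(b - a)) ^ u :=
    (continuous_id.sub continuous_const).abs.mul
      ((Real.continuous_rpow_const hu0).comp ((continuous_const.sub continuous_id).div_const _))
  have hftc : ∀ c d : ℝ, a ≤ c → d ≤ b → c ≤ d →
      ∫ x in c..d, (x - (a+b)/2) * ((b - x)/(b - a)) ^ u =
        (-((b-a)^2/(2*(u+1))) * ((b - d)/(b - a)) ^ (u+1)
            + ((b-a)^2/(u+2)) * ((b - d)/(b - a)) ^ (u+2))
        - (-((b-a)^2/(2*(u+1))) * ((b - c)/(b - a)) ^ (u+1)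
            + ((b-a)^2/(u+2)) * ((b - c)/(b - a)) ^ (u+2)) := by
    intro c d hc hd hcd
    refine intervalIntegral.integral_eq_sub_of_hasDerivAt
      (f := fun y => -((b-a)^2/(2*(u+1))) * ((b - y)/(b - a)) ^ (u+1)
        + ((b-a)^2/(u+2)) * ((b - y)/(b - a)) ^ (u+2)) (fun x hx => ?_)
      (hcont.intervalIntegrable _ _)
    rw [Set.uIcc_of_le hcd] at hx
    exact hh_aux_deriv a b u hab hu0 x ⟨le_trans hc hx.1, le_trans hx.2 hd⟩
  have hsplit : ∫ x in a..b, |x - (a+b)/2| * ((b - x)/(b - a)) ^ u =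
      (∫ x in a..((a+b)/2), |x - (a+b)/2| * ((b - x)/(b - a)) ^ u)
      + ∫ x in ((a+b)/2)..b, |x - (a+b)/2| * ((b - x)/(b - a)) ^ u :=
    (intervalIntegral.integral_add_adjacent_intervals
      (hconta.intervalIntegrable _ _) (hconta.intervalIntegrable _ _)).symm
  have h1 : ∫ x in a..((a+b)/2), |x - (a+b)/2| * ((b - x)/(b - a)) ^ u =
      - ∫ x in a..((a+b)/2), (x - (a+b)/2) * ((b - x)/(b - a)) ^ u := by
    rw [← intervalIntegral.integral_neg]
    refine intervalIntegral.integral_congr fun x hx => ?_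
    rw [Set.uIcc_of_le haM] at hx
    rw [abs_of_nonpos (by linarith [hx.2])]
    ring
  have h2 : ∫ x in ((a+b)/2)..b, |x - (a+b)/2| * ((b - x)/(b - a)) ^ u =
      ∫ x in ((a+b)/2)..b, (x - (a+b)/2) * ((b - x)/(b - a)) ^ u := by
    refine intervalIntegral.integral_congr fun x hx => ?_
    rw [Set.uIcc_of_le hMb] at hx
    rw [abs_of_nonneg (by linarith [hx.1])]
  have hbb : (b - b)/(b - a) = 0 := by simp
  have hba : (b - a)/(b - a) = 1 := div_self hL.ne'
  have hbM : (b - (a+b)/2)/(b - a) = 1/2 := by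
    rw [div_eq_div_iff hL.ne' two_ne_zero]; ring
  have hu1 : (0:ℝ) < u + 1 := by linarith
  have hu2 : (0:ℝ) < u + 2 := by linarith
  have hc0 : (0:ℝ) < 2 ^ u := Real.rpow_pos_of_pos two_pos u
  have e1 : ((1:ℝ)/2) ^ (u+1) = (2 ^ u * 2)⁻¹ := by
    rw [one_div, Real.inv_rpow (by norm_num), Real.rpow_add two_pos, Real.rpow_one]
  have e2 : ((1:ℝ)/2) ^ (u+2) = (2 ^ u * 2 * 2)⁻¹ := by
    rw [one_div, Real.inv_rpow (by norm_num), show u + 2 = u + 1 + 1 by ring,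
      Real.rpow_add two_pos, Real.rpow_add two_pos, Real.rpow_one]
  rw [hsplit, h1, h2, hftc a ((a+b)/2) le_rfl hMb haM, hftc ((a+b)/2) b haM le_rfl hMb,
    hbb, hba, hbM, e1, e2, Real.zero_rpow hu1.ne', Real.zero_rpow hu2.ne',
    Real.one_rpow, Real.one_rpow]
  field_simp
  ring

set_option maxHeartbeats 1000000 in
/-- Theorem 3: power-mean-type Hermite–Hadamard estimate for `|f'|^q` being
`s`-`(α,m)`-convex (first sense), `q > 1`, `p = q/(q-1)`. -/
theorem hh_s_alpha_m_convex_power_mean (f f' : ℝ → ℝ) (a b α m s p q c d : ℝ)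
    (ha : 0 ≤ a) (hab : a < b)
    (hα : α ∈ Set.Icc (0:ℝ) 1) (hm : m ∈ Set.Ioc (0:ℝ) 1) (hs : s ∈ Set.Ioc (0:ℝ) 1)
    (hq : 1 < q) (hp : p = q / (q - 1))
    (hc : c < a) (hd : b / m < d)
    (hdiff : ∀ x ∈ Set.Ioo c d, HasDerivAt f (f' x) x)
    (hint : IntervalIntegrable f' volume a b)
    (hconv : ∀ x ∈ Set.Icc a b, ∀ y ∈ Set.Icc a b, ∀ t ∈ Set.Icc (0:ℝ) 1,
      |f' (t * x + (1 - t) * y)| ^ q ≤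
        t ^ (α * s) * |f' x| ^ q + m * (1 - t ^ (α * s)) * |f' (y / m)| ^ q) :
    |(f a + f b) / 2 - (1 / (b - a)) * ∫ x in a..b, f x| ≤
      ((b - a) / 2 ^ ((p + 1) / p)) *
        ((1 + 2 ^ (α * s) * (α * s)) / (2 ^ (α * s) * (α * s + 1) * (α * s + 2))
            * |f' a| ^ q
          + m * (1 / 2 -
              (1 + 2 ^ (α * s) * (α * s)) / (2 ^ (α * s) * (α * s + 1) * (α * s + 2)))
            * |f' (b / m)| ^ q) ^ (1 / q) := by
  obtain ⟨hα0, hα1⟩ := hα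
  obtain ⟨hm0, hm1⟩ := hm
  obtain ⟨hs0, hs1⟩ := hs
  set u := α * s with hu
  have hu0 : 0 ≤ u := mul_nonneg hα0 hs0.le
  have hL : (0:ℝ) < b - a := by linarith
  have hb0 : 0 < b := lt_of_le_of_lt ha hab
  have hq0 : (0:ℝ) < q := by linarith
  have hq1 : (0:ℝ) < q - 1 := by linarith
  have hp1 : 1 < p := by rw [hp, lt_div_iff₀ hq1]; linarith
  have hp0 : (0:ℝ) < p := by linarith
  have hsum : 1/p + 1/q = 1 := by rw [hp, one_div_div]; field_simp; ring
  have hiq : (0:ℝ) ≤ 1/q := by positivity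
  have hip : (0:ℝ) ≤ 1/p := by positivity
  set A := |f' a| ^ q with hA
  set B := |f' (b/m)| ^ q with hB
  have hA0 : 0 ≤ A := Real.rpow_nonneg (abs_nonneg _) q
  have hB0 : 0 ≤ B := Real.rpow_nonneg (abs_nonneg _) q
  set v := (1 + 2 ^ u * u) / (2 ^ u * (u+1) * (u+2)) with hv
  set R := v * A + m * (1/2 - v) * B with hR
  set M := (a+b)/2 with hM
  set T : ℝ → ℝ := fun x => ((b - x)/(b - a)) ^ u with hT
  -- inclusion of [a,b] in (c,d)
  have hbm : b ≤ b / m := by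
    rw [le_div_iff₀ hm0]; nlinarith
  have hsub : Set.Icc a b ⊆ Set.Ioo c d := fun x hx =>
    ⟨lt_of_lt_of_le hc hx.1, lt_of_le_of_lt (le_trans hx.2 hbm) hd⟩
  -- pointwise convexity bound
  have hpt : ∀ x ∈ Set.Icc a b, |f' x| ^ q ≤
      T x * A + m * (1 - T x) * B := by
    intro x hx
    have ht0 : 0 ≤ (b - x)/(b - a) := div_nonneg (by linarith [hx.2]) hL.le
    have ht1 : (b - x)/(b - a) ≤ 1 := by
      rw [div_le_one hL]; linarith [hx.1]
    have hxe : ((b - x)/(b - a)) * a + (1 - (b - x)/(b - a)) * b = x := by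
      field_simp
      ring
    have := hconv a ⟨le_rfl, hab.le⟩ b ⟨hab.le, le_rfl⟩ ((b - x)/(b - a)) ⟨ht0, ht1⟩
    rw [hxe] at this
    exact this
  have hT0 : ∀ x ∈ Set.Icc a b, 0 ≤ T x := fun x hx =>
    Real.rpow_nonneg (div_nonneg (by linarith [hx.2]) hL.le) u
  have hT1 : ∀ x ∈ Set.Icc a b, T x ≤ 1 := fun x hx =>
    Real.rpow_le_one (div_nonneg (by linarith [hx.2]) hL.le)
      (by rw [div_le_one hL]; linarith [hx.1]) hu0
  have hCb : ∀ x ∈ Set.Icc a b, |f' x| ^ q ≤ A + m * B := by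
    intro x hx
    have h1 := hpt x hx
    have h2 := hT0 x hx
    have h3 := hT1 x hx
    nlinarith [mul_nonneg (sub_nonneg.2 h3) hA0, mul_nonneg (mul_nonneg hm0.le h2) hB0]
  -- integration by parts identity
  have hparts : ∫ x in a..b, (x - M) * f' x
      = (b - M) * f b - (a - M) * f a - ∫ x in a..b, f x := by
    have := intervalIntegral.integral_mul_deriv_eq_deriv_mul
      (u := fun y => y - M) (u' := fun _ => 1) (v := f) (v' := f') (a := a) (b := b)
      (fun x _ => (hasDerivAt_id x).sub_const M)
      (fun x hx => hdiff x (hsub (by rwa [Set.uIcc_of_le hab.le] at hx)))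
      intervalIntegrable_const hint
    simpa using this
  have key : |(f a + f b) / 2 - (1 / (b - a)) * ∫ x in a..b, f x|
      = (1/(b - a)) * |∫ x in a..b, (x - M) * f' x| := by
    have heq : (f a + f b) / 2 - (1 / (b - a)) * ∫ x in a..b, f x
        = (1/(b - a)) * ∫ x in a..b, (x - M) * f' x := by
      rw [hparts, hM]
      field_simp
      ring
    rw [heq, abs_mul, abs_of_pos (by positivity : (0:ℝ) < 1/(b - a))]
  -- finite measure instance
  haveI : IsFiniteMeasure (volume.restrict (Set.Ioc a b)) :=
    ⟨by rw [Measure.restrict_apply_univ]; exact measure_Ioc_lt_top⟩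
  have hconj : Real.HolderConjugate p q := Real.holderConjugate_iff.mpr ⟨hp1, by simpa [one_div] using hsum⟩
  have hf'm : AEStronglyMeasurable f' (volume.restrict (Set.Ioc a b)) :=
    hint.1.aestronglyMeasurable
  have habsm : AEStronglyMeasurable (fun x => |f' x|) (volume.restrict (Set.Ioc a b)) := by
    simpa [Real.norm_eq_abs] using hf'm.norm
  have hq_m : AEStronglyMeasurable (fun x => |f' x| ^ q) (volume.restrict (Set.Ioc a b)) :=
    (Real.continuous_rpow_const hq0.le).comp_aestronglyMeasurable habsm
  have hcK : Continuous fun x : ℝ => |x - M| := (continuous_id.sub continuous_const).abs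
  have hcT : Continuous T := (Real.continuous_rpow_const hu0).comp
      ((continuous_const.sub continuous_id).div_const _)
  have hKb : ∀ x ∈ Set.Ioc a b, |x - M| ≤ b - a := by
    intro x hx
    rw [abs_le, hM]
    have h1 := hx.1
    have h2 := hx.2
    constructor
    · linarith
    · linarith
  -- Memℒp facts for Hölder
  have hFm : MemLp (fun x => |x - M| ^ (1/p)) (ENNReal.ofReal p)
      (volume.restrict (Set.Ioc a b)) := by
    refine MemLp.of_bound
      (((Real.continuous_rpow_const hip).comp hcK).aestronglyMeasurable)
      ((b - a) ^ (1/p)) ?_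
    refine (ae_restrict_iff' measurableSet_Ioc).2 (Filter.Eventually.of_forall fun x hx => ?_)
    rw [Real.norm_eq_abs, abs_of_nonneg (Real.rpow_nonneg (abs_nonneg _) _)]
    exact Real.rpow_le_rpow (abs_nonneg _) (hKb x hx) hip
  have hfbd : ∀ x ∈ Set.Ioc a b, |f' x| ≤ (A + m*B) ^ (1/q) := by
    intro x hx
    have h1 : (|f' x| ^ q) ^ (1/q) ≤ (A + m*B) ^ (1/q) :=
      Real.rpow_le_rpow (Real.rpow_nonneg (abs_nonneg _) _)
        (hCb x (Set.Ioc_subset_Icc_self hx)) hiq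
    rwa [← Real.rpow_mul (abs_nonneg _), mul_one_div, div_self hq0.ne', Real.rpow_one] at h1
  have hGm : MemLp (fun x => |x - M| ^ (1/q) * |f' x|) (ENNReal.ofReal q)
      (volume.restrict (Set.Ioc a b)) := by
    refine MemLp.of_bound
      ((((Real.continuous_rpow_const hiq).comp hcK).aestronglyMeasurable).mul habsm)
      ((b - a) ^ (1/q) * (A + m*B) ^ (1/q)) ?_
    refine (ae_restrict_iff' measurableSet_Ioc).2 (Filter.Eventually.of_forall fun x hx => ?_)
    rw [Real.norm_eq_abs, abs_mul, abs_of_nonneg (Real.rpow_nonneg (abs_nonneg _) _), abs_abs]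
    exact mul_le_mul (Real.rpow_le_rpow (abs_nonneg _) (hKb x hx) hiq) (hfbd x hx)
      (abs_nonneg _) (Real.rpow_nonneg (by linarith) _)
  have hHold := integral_mul_le_Lp_mul_Lq_of_nonneg hconj
    (Filter.Eventually.of_forall fun x => Real.rpow_nonneg (abs_nonneg _) _)
    (Filter.Eventually.of_forall fun x =>
      mul_nonneg (Real.rpow_nonneg (abs_nonneg _) _) (abs_nonneg _))
    hFm hGm
  have eq1 : ∫ x in Set.Ioc a b, (|x - M| ^ (1/p)) * (|x - M| ^ (1/q) * |f' x|)
      = ∫ x in Set.Ioc a b, |x - M| * |f' x| := by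
    refine integral_congr_ae (Filter.Eventually.of_forall fun x => ?_)
    dsimp only
    rw [← mul_assoc, ← Real.rpow_add' (abs_nonneg _) (by rw [hsum]; norm_num), hsum,
      Real.rpow_one]
  have eq2 : ∫ x in Set.Ioc a b, ((|x - M| ^ (1/p)) ^ p)
      = ∫ x in Set.Ioc a b, |x - M| := by
    refine integral_congr_ae (Filter.Eventually.of_forall fun x => ?_)
    dsimp only
    rw [← Real.rpow_mul (abs_nonneg _), one_div_mul_cancel hp0.ne', Real.rpow_one]
  have eq3 : ∫ x in Set.Ioc a b, ((|x - M| ^ (1/q) * |f' x|) ^ q)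
      = ∫ x in Set.Ioc a b, |x - M| * |f' x| ^ q := by
    refine integral_congr_ae (Filter.Eventually.of_forall fun x => ?_)
    dsimp only
    rw [Real.mul_rpow (Real.rpow_nonneg (abs_nonneg _) _) (abs_nonneg _),
      ← Real.rpow_mul (abs_nonneg _), one_div_mul_cancel hq0.ne', Real.rpow_one]
  rw [eq1, eq2, eq3] at hHold
  -- values of the weight integrals
  have hI2 : ∫ x in a..b, |x - M| * T x = (b - a)^2 * v / 2 := by
    simp only [hT, hv, hM]
    exact hh_aux_I2 a b u hab hu0
  have hI1 : ∫ x in a..b, |x - M| = (b - a)^2 / 4 := by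
    have h0 := hh_aux_I2 a b 0 hab le_rfl
    simp only [Real.rpow_zero, mul_one] at h0
    rw [hM, h0]
    ring
  have hset1 : ∫ x in Set.Ioc a b, |x - M| = (b - a)^2 / 4 := by
    rw [← intervalIntegral.integral_of_le hab.le]; exact hI1
  -- comparison with the convexity bound
  have hKq_int : IntervalIntegrable (fun x => |x - M| * |f' x| ^ q) volume a b := by
    refine IntervalIntegrable.mono_fun
      (intervalIntegrable_const (c := (b - a) * (A + m * B))) ?_ ?_
    · exact (hcK.aestronglyMeasurable).mul (by rwa [Set.uIoc_of_le hab.le])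
    · refine (ae_restrict_iff' measurableSet_uIoc).2 (Filter.Eventually.of_forall fun x hx => ?_)
      rw [Set.uIoc_of_le hab.le] at hx
      dsimp only
      have hgoal : |x - M| * |f' x| ^ q ≤ (b - a) * (A + m * B) :=
        mul_le_mul (hKb x hx) (hCb x (Set.Ioc_subset_Icc_self hx))
          (Real.rpow_nonneg (abs_nonneg _) _) hL.le
      have h1 : (0:ℝ) ≤ |x - M| * |f' x| ^ q :=
        mul_nonneg (abs_nonneg _) (Real.rpow_nonneg (abs_nonneg _) _)
      rw [Real.norm_eq_abs, Real.norm_eq_abs, abs_of_nonneg h1,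
        abs_of_nonneg (h1.trans hgoal)]
      exact hgoal
  have hTAint : IntervalIntegrable
      (fun x => |x - M| * (T x * A + m * (1 - T x) * B)) volume a b :=
    (hcK.mul ((hcT.mul continuous_const).add
      ((continuous_const.mul (continuous_const.sub hcT)).mul
        continuous_const))).intervalIntegrable _ _
  have hcomp : ∫ x in a..b, |x - M| * |f' x| ^ q
      ≤ ∫ x in a..b, |x - M| * (T x * A + m * (1 - T x) * B) :=
    intervalIntegral.integral_mono_on hab.le hKq_int hTAint fun x hx =>
      mul_le_mul_of_nonneg_left (hpt x hx) (abs_nonneg _)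
  have hlin : ∫ x in a..b, |x - M| * (T x * A + m * (1 - T x) * B)
      = A * (∫ x in a..b, |x - M| * T x)
        + m * B * ((∫ x in a..b, |x - M|) - ∫ x in a..b, |x - M| * T x) := by
    have e : (fun x => |x - M| * (T x * A + m * (1 - T x) * B))
        = fun x => (A * (|x - M| * T x) + (m * B) * |x - M|) - (m * B) * (|x - M| * T x) := by
      funext x; ring
    rw [e, intervalIntegral.integral_sub
        (f := fun x => A * (|x - M| * T x) + (m * B) * |x - M|) (g := fun x => (m * B) * (|x - M| * T x))
        (((continuous_const.mul (hcK.mul hcT)).add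
          (continuous_const.mul hcK)).intervalIntegrable _ _)
        ((continuous_const.mul (hcK.mul hcT)).intervalIntegrable _ _),
      intervalIntegral.integral_add
        (f := fun x => A * (|x - M| * T x)) (g := fun x => (m * B) * |x - M|)
        ((continuous_const.mul (hcK.mul hcT)).intervalIntegrable _ _)
        ((continuous_const.mul hcK).intervalIntegrable _ _),
      intervalIntegral.integral_const_mul, intervalIntegral.integral_const_mul,
      intervalIntegral.integral_const_mul]
    ring
  have hsetq : ∫ x in Set.Ioc a b, |x - M| * |f' x| ^ q ≤ ((b - a)^2/2) * R := by
    rw [← intervalIntegral.integral_of_le hab.le]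
    calc ∫ x in a..b, |x - M| * |f' x| ^ q
        ≤ ∫ x in a..b, |x - M| * (T x * A + m * (1 - T x) * B) := hcomp
      _ = A * ((b - a)^2 * v / 2) + m * B * ((b - a)^2/4 - (b - a)^2 * v / 2) := by
          rw [hlin, hI2, hI1]
      _ = ((b - a)^2/2) * R := by rw [hR]; ring
  have hq_nonneg : 0 ≤ ∫ x in Set.Ioc a b, |x - M| * |f' x| ^ q :=
    setIntegral_nonneg measurableSet_Ioc fun x _ =>
      mul_nonneg (abs_nonneg _) (Real.rpow_nonneg (abs_nonneg _) _)
  have hR0 : 0 ≤ R := by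
    have h := hq_nonneg.trans hsetq
    have h2 : (0:ℝ) < (b - a)^2/2 := by positivity
    by_contra hneg
    push_neg at hneg
    nlinarith [mul_pos h2 (neg_pos.2 hneg)]
  -- coefficient identity
  have hcoef : (1/(b - a)) * (((b - a)^2/4) ^ (1/p) * ((b - a)^2/2) ^ (1/q))
      = (b - a) / 2 ^ ((p+1)/p) := by
    have hsq : (0:ℝ) ≤ (b - a)^2 := sq_nonneg _
    have h2r : (2:ℝ) ^ (2:ℝ) = 4 := by
      rw [show (2:ℝ) ^ (2:ℝ) = (2:ℝ) ^ ((2:ℕ):ℝ) by norm_num, Real.rpow_natCast]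
      norm_num
    have e4 : (4:ℝ) ^ (1/p) = 2 ^ (2*(1/p)) := by
      rw [Real.rpow_mul (by norm_num : (0:ℝ) ≤ 2), h2r]
    have hexp : 2*(1/p) + 1/q = (p+1)/p := by
      rw [add_div, div_self hp0.ne']
      linarith [hsum]
    rw [Real.div_rpow hsq (by norm_num : (0:ℝ) ≤ 4),
      Real.div_rpow hsq (by norm_num : (0:ℝ) ≤ 2), e4, div_mul_div_comm,
      ← Real.rpow_add (pow_pos hL 2), hsum, Real.rpow_one,
      show (2:ℝ) ^ (1/q) = 2 ^ (1*(1/q)) by rw [one_mul],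
      ← Real.rpow_add two_pos, one_mul, hexp]
    have h2p : (0:ℝ) < 2 ^ ((p+1)/p) := Real.rpow_pos_of_pos two_pos _
    field_simp
  -- final assembly
  calc |(f a + f b) / 2 - (1 / (b - a)) * ∫ x in a..b, f x|
      = (1/(b - a)) * |∫ x in a..b, (x - M) * f' x| := key
    _ ≤ (1/(b - a)) * (((b - a)^2/4) ^ (1/p) * (((b - a)^2/2) * R) ^ (1/q)) := by
        refine mul_le_mul_of_nonneg_left ?_ (by positivity)
        calc |∫ x in a..b, (x - M) * f' x|
            ≤ ∫ x in a..b, |(x - M) * f' x| :=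
              intervalIntegral.abs_integral_le_integral_abs hab.le
          _ = ∫ x in Set.Ioc a b, |x - M| * |f' x| := by
              rw [intervalIntegral.integral_of_le hab.le]
              exact integral_congr_ae (Filter.Eventually.of_forall fun x => abs_mul _ _)
          _ ≤ (∫ x in Set.Ioc a b, |x - M|) ^ (1/p)
              * (∫ x in Set.Ioc a b, |x - M| * |f' x| ^ q) ^ (1/q) := hHold
          _ ≤ (((b - a)^2/4)) ^ (1/p) * (((b - a)^2/2) * R) ^ (1/q) := by
              rw [hset1]
              exact mul_le_mul_of_nonneg_left
                (Real.rpow_le_rpow hq_nonneg hsetq hiq)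
                (Real.rpow_nonneg (by positivity) _)
    _ = ((b - a) / 2 ^ ((p+1)/p)) * R ^ (1/q) := by
        rw [Real.mul_rpow (by positivity : (0:ℝ) ≤ (b - a)^2/2) hR0, ← hcoef]
        ring
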